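/- Fix n, t, s, q ∈ ℕ with n ≥ 1 and set N = n + t. Let 𝒢 be a finite gate set: a finite family of gates, each gate g consisting of an arity a(g) ≤ q and a unitary U_g on EuclideanSpace ℂ (Fin a(g) → Fin 2). For an injective map ι : Fin a(g) → Fin N, the application Apply(g, ι) is the linear map on EuclideanSpace ℂ (Fin N → Fin 2) given by (Apply(g, ι) v)(σ) = Σ_{c : Fin a(g) → Fin 2} U_g(σ∘ι, c) · v(σ[ι := c]), where σ[ι := c] agrees with σ off the range of ι and equals c(k) at ι(k). A circuit of size k over 𝒢 on N qubits is a list of k pairs (gate, injective wire assignment), and its operator C is the composition of the corresponding applications in order. Say such a circuit computes f : (Fin n → Fin 2) → Fin 2 if ‖Π_{f(x)}(C e_{pad(x)})‖² > 1/2 for every x. Then the number of functions f : (Fin n → Fin 2) → Fin 2 that are computed by some circuit over 𝒢 of size at most s on N qubits is at most (card(𝒢) · N^q + 1)^s. -/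

import Mathlib

/-- `pad n t x` is the length-`(n+t)` bitstring equal to `x` on the first `n`
coordinates and `0` on the remaining `t`. -/
def pad (n t : ℕ) (x : Fin n → Fin 2) : Fin (n + t) → Fin 2 :=
  fun j => if h : (j : ℕ) < n then x ⟨j, h⟩ else 0

/-- Orthogonal projection onto bitstrings whose first bit equals `b`. -/
def firstBitProj {N : ℕ} (hN : 0 < N) (b : Fin 2)
    (v : EuclideanSpace ℂ (Fin N → Fin 2)) : EuclideanSpace ℂ (Fin N → Fin 2) :=
  WithLp.toLp 2 (fun s => if s ⟨0, hN⟩ = b then v s else 0)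

/-- A quantum gate: an arity (at most `q`) together with a unitary on the
corresponding space. -/
structure Gate (q : ℕ) where
  arity : ℕ
  arity_le : arity ≤ q
  U : EuclideanSpace ℂ (Fin arity → Fin 2) ≃ₗᵢ[ℂ] EuclideanSpace ℂ (Fin arity → Fin 2)

/-- `updAt emb σ c` agrees with `σ` off the range of `emb` and equals `c k` at
`emb k`. -/
noncomputable def updAt {a N : ℕ} (emb : Fin a → Fin N) (σ : Fin N → Fin 2)
    (c : Fin a → Fin 2) : Fin N → Fin 2 :=
  fun j => if h : ∃ k, emb k = j then c h.choose else σ j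

/-- Application of a gate `g` along an (injective) wire assignment
`emb : Fin g.arity → Fin N`. -/
noncomputable def applyGate {q N : ℕ} (g : Gate q) (emb : Fin g.arity → Fin N)
    (v : EuclideanSpace ℂ (Fin N → Fin 2)) : EuclideanSpace ℂ (Fin N → Fin 2) :=
  WithLp.toLp 2 (fun σ => ∑ c : Fin g.arity → Fin 2,
    (g.U (EuclideanSpace.single c 1)) (σ ∘ emb) * v (updAt emb σ c))

/-- One step of a circuit over the gate set `G`: a gate together with an
injective wire assignment. -/
structure CircuitStep (q N : ℕ) {ι : Type*} (G : ι → Gate q) where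
  gate : ι
  wires : Fin (G gate).arity → Fin N
  inj : Function.Injective wires

/-- The operator of a circuit: the composition of the gate applications in
order. -/
noncomputable def circuitOp {q N : ℕ} {ι : Type*} (G : ι → Gate q) :
    List (CircuitStep q N G) →
      EuclideanSpace ℂ (Fin N → Fin 2) → EuclideanSpace ℂ (Fin N → Fin 2)
  | [] => id
  | step :: rest => fun v => circuitOp G rest (applyGate (G step.gate) step.wires v)


/-! ### Auxiliary lemmas -/

noncomputable def splitEquiv {a N : ℕ} (emb : Fin a → Fin N) (hemb : Function.Injective emb) :
    (Fin N → Fin 2) ≃ ((Fin a → Fin 2) × ({j : Fin N // ¬ ∃ k, emb k = j} → Fin 2)) where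
  toFun σ := (σ ∘ emb, fun j => σ j.1)
  invFun p := fun j => if h : ∃ k, emb k = j then p.1 h.choose else p.2 ⟨j, h⟩
  left_inv σ := by
    funext j
    by_cases h : ∃ k, emb k = j
    · simp only [dif_pos h]
      exact congrArg σ h.choose_spec
    · simp only [dif_neg h]
  right_inv p := by
    refine Prod.ext (funext fun j => ?_) (funext fun j => ?_)
    · have h : ∃ k, emb k = emb j := ⟨j, rfl⟩
      simp only [Function.comp_apply, dif_pos h]
      exact congrArg p.1 (hemb h.choose_spec)
    · simp only [dif_neg j.2]

lemma updAt_eq {a N : ℕ} (emb : Fin a → Fin N) (hemb : Function.Injective emb)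
    (σ : Fin N → Fin 2) (c : Fin a → Fin 2) :
    updAt emb σ c = (splitEquiv emb hemb).symm (c, (splitEquiv emb hemb σ).2) := rfl

lemma symm_comp {a N : ℕ} (emb : Fin a → Fin N) (hemb : Function.Injective emb)
    (p : (Fin a → Fin 2) × ({j : Fin N // ¬ ∃ k, emb k = j} → Fin 2)) :
    ((splitEquiv emb hemb).symm p) ∘ emb = p.1 :=
  congrArg Prod.fst ((splitEquiv emb hemb).right_inv p)

lemma snd_symm {a N : ℕ} (emb : Fin a → Fin N) (hemb : Function.Injective emb)
    (p : (Fin a → Fin 2) × ({j : Fin N // ¬ ∃ k, emb k = j} → Fin 2)) :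
    (splitEquiv emb hemb ((splitEquiv emb hemb).symm p)).2 = p.2 :=
  congrArg Prod.snd ((splitEquiv emb hemb).right_inv p)

lemma applyGate_symm_apply {q N : ℕ} (g : Gate q) (emb : Fin g.arity → Fin N)
    (hemb : Function.Injective emb) (v : EuclideanSpace ℂ (Fin N → Fin 2))
    (b : Fin g.arity → Fin 2) (ρ : {j : Fin N // ¬ ∃ k, emb k = j} → Fin 2) :
    applyGate g emb v ((splitEquiv emb hemb).symm (b, ρ)) =
      ∑ c : Fin g.arity → Fin 2,
        (g.U (EuclideanSpace.single c 1)) b * v ((splitEquiv emb hemb).symm (c, ρ)) := by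
  unfold applyGate
  rw [PiLp.toLp_apply]
  refine Finset.sum_congr rfl fun c _ => ?_
  rw [symm_comp, updAt_eq emb hemb, snd_symm]

lemma gate_orthonormal {q : ℕ} (g : Gate q) (c c' : Fin g.arity → Fin 2) :
    ∑ b : Fin g.arity → Fin 2,
      (starRingEnd ℂ) ((g.U (EuclideanSpace.single c 1)) b) *
        (g.U (EuclideanSpace.single c' 1)) b = if c = c' then 1 else 0 := by
  have := g.U.inner_map_map (EuclideanSpace.single c 1) (EuclideanSpace.single c' 1)
  rw [PiLp.inner_apply] at this
  simp only [RCLike.inner_apply] at this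
  simp_rw [mul_comm ((starRingEnd ℂ) _)]
  rw [this, EuclideanSpace.inner_single_left, EuclideanSpace.single_apply]
  simp [eq_comm]

lemma applyGate_inner {q N : ℕ} (g : Gate q) (emb : Fin g.arity → Fin N)
    (hemb : Function.Injective emb) (v w : EuclideanSpace ℂ (Fin N → Fin 2)) :
    (inner ℂ (applyGate g emb v) (applyGate g emb w) : ℂ) = inner ℂ v w := by
  classical
  rw [PiLp.inner_apply, PiLp.inner_apply]
  simp only [RCLike.inner_apply]
  simp_rw [mul_comm _ ((starRingEnd ℂ) _)]
  rw [← Equiv.sum_comp (splitEquiv emb hemb).symm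
    (fun σ => (starRingEnd ℂ) (applyGate g emb v σ) * applyGate g emb w σ)]
  rw [← Equiv.sum_comp (splitEquiv emb hemb).symm
    (fun σ => (starRingEnd ℂ) (v σ) * w σ)]
  rw [Fintype.sum_prod_type, Fintype.sum_prod_type, Finset.sum_comm]
  conv_rhs => rw [Finset.sum_comm]
  refine Finset.sum_congr rfl fun ρ _ => ?_
  simp only [applyGate_symm_apply g emb hemb, map_sum, map_mul, Finset.sum_mul_sum]
  rw [Finset.sum_comm]
  have : ∀ c : Fin g.arity → Fin 2,
      (∑ b : Fin g.arity → Fin 2, ∑ c' : Fin g.arity → Fin 2,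
        (starRingEnd ℂ) ((g.U (EuclideanSpace.single c 1)) b) *
          (starRingEnd ℂ) (v ((splitEquiv emb hemb).symm (c, ρ))) *
          ((g.U (EuclideanSpace.single c' 1)) b * w ((splitEquiv emb hemb).symm (c', ρ)))) =
      (starRingEnd ℂ) (v ((splitEquiv emb hemb).symm (c, ρ))) *
        w ((splitEquiv emb hemb).symm (c, ρ)) := by
    intro c
    rw [Finset.sum_comm]
    have : ∀ c' : Fin g.arity → Fin 2,
        (∑ b : Fin g.arity → Fin 2,
          (starRingEnd ℂ) ((g.U (EuclideanSpace.single c 1)) b) *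
            (starRingEnd ℂ) (v ((splitEquiv emb hemb).symm (c, ρ))) *
            ((g.U (EuclideanSpace.single c' 1)) b * w ((splitEquiv emb hemb).symm (c', ρ)))) =
        (if c = c' then 1 else 0) *
          ((starRingEnd ℂ) (v ((splitEquiv emb hemb).symm (c, ρ))) *
            w ((splitEquiv emb hemb).symm (c', ρ))) := by
      intro c'
      rw [← gate_orthonormal g c c', Finset.sum_mul]
      refine Finset.sum_congr rfl fun b _ => ?_
      ring
    simp only [this, ite_mul, one_mul, zero_mul]
    simp
  simp only [this]

lemma applyGate_norm {q N : ℕ} (g : Gate q) (emb : Fin g.arity → Fin N)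
    (hemb : Function.Injective emb) (v : EuclideanSpace ℂ (Fin N → Fin 2)) :
    ‖applyGate g emb v‖ = ‖v‖ := by
  have h := applyGate_inner g emb hemb v v
  have h1 : ‖applyGate g emb v‖ ^ 2 = ‖v‖ ^ 2 := by
    rw [@norm_sq_eq_re_inner ℂ, @norm_sq_eq_re_inner ℂ, h]
  nlinarith [norm_nonneg (applyGate g emb v), norm_nonneg v]

lemma circuitOp_norm {q N : ℕ} {ι : Type*} (G : ι → Gate q)
    (C : List (CircuitStep q N G)) (v : EuclideanSpace ℂ (Fin N → Fin 2)) :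
    ‖circuitOp G C v‖ = ‖v‖ := by
  induction C generalizing v with
  | nil => rfl
  | cons step rest ih =>
      rw [circuitOp, ih, applyGate_norm _ _ step.inj]

lemma euclidean_norm_sq {X : Type*} [Fintype X] (x : EuclideanSpace ℂ X) :
    ‖x‖ ^ 2 = ∑ i, ‖x i‖ ^ 2 := by
  rw [EuclideanSpace.norm_eq, Real.sq_sqrt]
  positivity

lemma firstBitProj_sum {N : ℕ} (hN : 0 < N) (v : EuclideanSpace ℂ (Fin N → Fin 2)) :
    ‖firstBitProj hN 0 v‖ ^ 2 + ‖firstBitProj hN 1 v‖ ^ 2 = ‖v‖ ^ 2 := by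
  rw [euclidean_norm_sq, euclidean_norm_sq, euclidean_norm_sq, ← Finset.sum_add_distrib]
  refine Finset.sum_congr rfl fun s _ => ?_
  unfold firstBitProj
  simp only [PiLp.toLp_apply]
  by_cases h : s ⟨0, hN⟩ = 0
  · have h1 : ¬ s ⟨0, hN⟩ = 1 := by rw [h]; decide
    simp [h, h1]
  · have h1 : s ⟨0, hN⟩ = 1 := by omega
    simp [h, h1]

/-- The number of Boolean functions `f : {0,1}ⁿ → {0,1}` computed (with
per-input success probability `> 1/2`) by some circuit of size at most `s`
over a finite gate set `G` of arity-`≤ q` gates on `N = n + t` qubits is at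
most `(card 𝒢 · N^q + 1)^s`. -/
theorem count_computable_functions (n t s q : ℕ) (hn : 1 ≤ n)
    {ι : Type*} [Fintype ι] (G : ι → Gate q) :
    Set.ncard {f : (Fin n → Fin 2) → Fin 2 |
        ∃ C : List (CircuitStep q (n + t) G), C.length ≤ s ∧
          ∀ x, 1 / 2 < ‖firstBitProj (show 0 < n + t by omega) (f x)
            (circuitOp G C (EuclideanSpace.single (pad n t x) 1))‖ ^ 2} ≤
      (Fintype.card ι * (n + t) ^ q + 1) ^ s := by
  classical
  set N := n + t with hNdef
  have hN : 0 < N := by omega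
  set S := {f : (Fin n → Fin 2) → Fin 2 |
      ∃ C : List (CircuitStep q N G), C.length ≤ s ∧
        ∀ x, 1 / 2 < ‖firstBitProj (show 0 < n + t by omega) (f x)
          (circuitOp G C (EuclideanSpace.single (pad n t x) 1))‖ ^ 2} with hS
  -- CircuitStep is finite, with cardinality at most card ι * N ^ q
  let φ : CircuitStep q N G → ι × (Fin q → Fin N) := fun st =>
    (st.gate, fun i => if h : (i : ℕ) < (G st.gate).arity then st.wires ⟨i, h⟩ else ⟨0, hN⟩)
  have hφ : Function.Injective φ := by
    rintro ⟨g1, w1, i1⟩ ⟨g2, w2, i2⟩ hst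
    obtain ⟨hg, hw⟩ := Prod.mk.injEq .. ▸ hst
    dsimp only at hg
    subst hg
    have hw' : w1 = w2 := by
      funext k
      have hk : (k : ℕ) < (G g1).arity := k.2
      have := congrFun hw ⟨k, lt_of_lt_of_le hk (G g1).arity_le⟩
      simpa [hk] using this
    subst hw'
    rfl
  haveI hFinStep : Finite (CircuitStep q N G) := Finite.of_injective φ hφ
  have hcardStep : Nat.card (CircuitStep q N G) ≤ Fintype.card ι * N ^ q := by
    calc Nat.card (CircuitStep q N G) ≤ Nat.card (ι × (Fin q → Fin N)) :=
          Nat.card_le_card_of_injective φ hφ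
      _ = Fintype.card ι * N ^ q := by
          simp [Nat.card_eq_fintype_card, Fintype.card_fun]
  -- each circuit computes at most one function
  have huniq : ∀ f f' : (Fin n → Fin 2) → Fin 2, ∀ C : List (CircuitStep q N G),
      (∀ x, 1 / 2 < ‖firstBitProj hN (f x)
        (circuitOp G C (EuclideanSpace.single (pad n t x) 1))‖ ^ 2) →
      (∀ x, 1 / 2 < ‖firstBitProj hN (f' x)
        (circuitOp G C (EuclideanSpace.single (pad n t x) 1))‖ ^ 2) →
      f = f' := by
    intro f f' C hf hf'
    funext x
    by_contra hne
    set v := circuitOp G C (EuclideanSpace.single (pad n t x) 1) with hv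
    have hnv : ‖v‖ = 1 := by
      rw [hv, circuitOp_norm, EuclideanSpace.norm_single, norm_one]
    have hsum := firstBitProj_sum hN v
    rw [hnv] at hsum
    have h1 := hf x
    have h2 := hf' x
    have hcases : (f x = 0 ∧ f' x = 1) ∨ (f x = 1 ∧ f' x = 0) := by
      have e1 : (f x : ℕ) = 0 ∨ (f x : ℕ) = 1 := by have := (f x).isLt; omega
      have e2 : (f' x : ℕ) = 0 ∨ (f' x : ℕ) = 1 := by have := (f' x).isLt; omega
      have e3 : (f x : ℕ) ≠ (f' x : ℕ) := fun h => hne (Fin.ext h)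
      rcases e1 with h | h <;> rcases e2 with h' | h' <;>
        simp only [Fin.ext_iff, Fin.val_zero, Fin.val_one] <;> omega
    rcases hcases with ⟨ha, hb⟩ | ⟨ha, hb⟩ <;> rw [ha] at h1 <;> rw [hb] at h2 <;>
      simp only [one_pow] at * <;> linarith
  -- injection from S into functions Fin s → Option (CircuitStep q N G)
  have hinj : ∃ Φ : S → (Fin s → Option (CircuitStep q N G)), Function.Injective Φ := by
    refine ⟨fun f => fun i => (f.2.choose)[(i : ℕ)]?, ?_⟩
    intro f f' hff
    have hL1 := f.2.choose_spec
    have hL2 := f'.2.choose_spec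
    have hlists : f.2.choose = f'.2.choose := by
      apply List.ext_getElem?
      intro m
      by_cases hm : m < s
      · exact congrFun hff ⟨m, hm⟩
      · rw [List.getElem?_eq_none (le_trans hL1.1 (by omega)),
          List.getElem?_eq_none (le_trans hL2.1 (by omega))]
    have := huniq f.1 f'.1 f.2.choose hL1.2 (hlists ▸ hL2.2)
    exact Subtype.ext this
  obtain ⟨Φ, hΦ⟩ := hinj
  haveI : Finite (Option (CircuitStep q N G)) :=
    Finite.of_equiv ((CircuitStep q N G) ⊕ PUnit.{1})
      (Equiv.optionEquivSumPUnit.{0, _} (CircuitStep q N G)).symm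
  calc Set.ncard S = Nat.card S := (Nat.card_coe_set_eq S).symm
    _ ≤ Nat.card (Fin s → Option (CircuitStep q N G)) :=
        Nat.card_le_card_of_injective Φ hΦ
    _ = (Nat.card (CircuitStep q N G) + 1) ^ s := by
        rw [Nat.card_fun, Finite.card_option, Nat.card_eq_fintype_card (α := Fin s),
          Fintype.card_fin]
    _ ≤ (Fintype.card ι * N ^ q + 1) ^ s :=
        Nat.pow_le_pow_left (by omega) s
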